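/- In the limiting dynamical system, if the growth parameter ρ is strictly positive, then the blow-up time is finite: t* < ∞ for every γ > 0 and every α > 1. -/

import Mathlib

namespace SelectiveSweeps

noncomputable section

/-- `γ_j = (1+γ)^j − 1` for `j ∈ ℤ`. -/
def gam (γ : ℝ) (j : ℤ) : ℝ := (1 + γ) ^ j - 1

/-- `λ_j = (1+ρ)(1+γ)^j − 1` for `j ∈ ℤ`. -/
def lam (γ ρ : ℝ) (j : ℤ) : ℝ := (1 + ρ) * (1 + γ) ^ j - 1

/-- A state of the recursion: the time `s_n` together with the values `y_j(s_n)`, `j ∈ ℕ`. -/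
structure St where
  s : ℝ
  y : ℕ → ℝ

/-- `α_n = α + ρ s_n / γ`. -/
def alphaOf (γ ρ α : ℝ) (σ : St) : ℝ := α + ρ * σ.s / γ

/-- `m_n = max {j : y_j(s_n) = α_n}`. -/
def mOf (γ ρ α : ℝ) (σ : St) : ℕ := sSup {j : ℕ | σ.y j = alphaOf γ ρ α σ}

/-- `k_n = max {j : y_j(s_n) > 0}`. -/
def kOf (σ : St) : ℕ := sSup {j : ℕ | 0 < σ.y j}

/-- `k_n^* = k_n` if `y_{k_n}(s_n) < 1`, and `k_n + 1` if `y_{k_n}(s_n) = 1`. -/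
def kstarOf (σ : St) : ℕ := if σ.y (kOf σ) < 1 then kOf σ else kOf σ + 1

/-- `δ_{n,j}`:  `(α_n − y_j(s_n))·γ/(λ_{j−m_n} − ρ)` for `m_n < j < k_n^*` and
`(1 − y_{k_n^*}(s_n))·γ/λ_{k_n^*−m_n}` for `j = k_n^*`. -/
def deltaOf (γ ρ α : ℝ) (σ : St) (j : ℕ) : ℝ :=
  if j = kstarOf σ then
    (1 - σ.y (kstarOf σ)) * γ / lam γ ρ ((kstarOf σ : ℤ) - (mOf γ ρ α σ : ℤ))
  else
    (alphaOf γ ρ α σ - σ.y j) * γ / (lam γ ρ ((j : ℤ) - (mOf γ ρ α σ : ℤ)) - ρ)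

/-- `Δ_n = min {δ_{n,j} : m_n < j ≤ k_n^*}`. -/
def DeltaOf (γ ρ α : ℝ) (σ : St) : ℝ :=
  sInf (deltaOf γ ρ α σ '' Set.Ioc (mOf γ ρ α σ) (kstarOf σ))

/-- One step of the recursion: `s_{n+1} = s_n + Δ_n` and, evaluating
`y_j(s_n + t) = max (y_j(s_n) + t·λ_{j−m_n}/γ) 0` (for `j ≤ k_n^*`; `0` for `j > k_n^*`)
at `t = Δ_n`, the new values `y_j(s_{n+1})`. -/
def step (γ ρ α : ℝ) (σ : St) : St where
  s := σ.s + DeltaOf γ ρ α σ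
  y := fun j =>
    if j ≤ kstarOf σ then
      max (σ.y j + DeltaOf γ ρ α σ * lam γ ρ ((j : ℤ) - (mOf γ ρ α σ : ℤ)) / γ) 0
    else 0

/-- The state after `n` steps: `(state γ ρ α n).s = s_n` and `(state γ ρ α n).y j = y_j(s_n)`.
Initially `s_0 = 0` and `y_j(0) = max (α − j) 0`. -/
def state (γ ρ α : ℝ) (n : ℕ) : St :=
  (step γ ρ α)^[n] ⟨0, fun j => max (α - j) 0⟩

/-- The index `n` of the interval `[s_n, s_{n+1}]` used to evaluate `y_j` at time `t`. -/
def idxAt (γ ρ α : ℝ) (t : ℝ) : ℕ := sInf {n : ℕ | t < (state γ ρ α (n + 1)).s}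

/-- `y_j(t)`, evaluated via the piecewise linear recursion: for `s_n ≤ t ≤ s_{n+1}`,
`y_j(t) = max (y_j(s_n) + (t − s_n)·λ_{j−m_n}/γ) 0` for `j ≤ k_n^*`, and `0` for `j > k_n^*`. -/
def yAt (γ ρ α : ℝ) (j : ℕ) (t : ℝ) : ℝ :=
  let σ := state γ ρ α (idxAt γ ρ α t)
  if j ≤ kstarOf σ then
    max (σ.y j + (t - σ.s) * lam γ ρ ((j : ℤ) - (mOf γ ρ α σ : ℤ)) / γ) 0
  else 0

/-- Conditions (i)–(ii) at a state: (i) the sets defining `m_n` and `k_n` are nonempty and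
bounded, `y_j(s_n) ≤ α_n` for all `j`, and `y_j(s_n) > 0` for `m_n ≤ j ≤ k_n`;
(ii) `y_{j+1}(s_n) ≥ y_j(s_n) − 1` for all `0 ≤ j ≤ k_n`. -/
def Cond (γ ρ α : ℝ) (σ : St) : Prop :=
  {j : ℕ | σ.y j = alphaOf γ ρ α σ}.Nonempty ∧
  BddAbove {j : ℕ | σ.y j = alphaOf γ ρ α σ} ∧
  {j : ℕ | 0 < σ.y j}.Nonempty ∧
  BddAbove {j : ℕ | 0 < σ.y j} ∧
  (∀ j : ℕ, σ.y j ≤ alphaOf γ ρ α σ) ∧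
  (∀ j : ℕ, mOf γ ρ α σ ≤ j → j ≤ kOf σ → 0 < σ.y j) ∧
  (∀ j : ℕ, j ≤ kOf σ → σ.y j - 1 ≤ σ.y (j + 1))

/-- `t_j = inf { t ∈ [0, t*) : y_j(t) = 1 }`, where `t < t* = Σ_n Δ_n = sup_n s_n` is
expressed as `∃ n, t < s_n`. -/
def tHit (γ ρ α : ℝ) (j : ℕ) : ℝ :=
  sInf {t : ℝ | 0 ≤ t ∧ (∃ n : ℕ, t < (state γ ρ α n).s) ∧ yAt γ ρ α j t = 1}


set_option linter.unusedSectionVars false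
set_option linter.unusedVariables false

section AuxProof

/-- `κ = z/(z-1)` with `z = (1+ρ)(1+γ)`. -/
def kap (γ ρ : ℝ) : ℝ := ((1 + ρ) * (1 + γ)) / ((1 + ρ) * (1 + γ) - 1)

/-- The potential function used in the key induction. -/
def Phi (γ ρ α : ℝ) (σ : St) (j : ℕ) : ℝ :=
  α + kap γ ρ * (((1 + γ) / γ) -
    (1 + γ) ^ ((j : ℤ) - (kstarOf σ : ℤ)) * ((1 + γ) / γ - σ.y (kstarOf σ)))

/-- The invariants propagated along the recursion. -/
structure GInv (γ ρ α : ℝ) (σ : St) : Prop where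
  s0 : 0 ≤ σ.s
  y0 : ∀ j, 0 ≤ σ.y j
  supp : ∀ j, kOf σ < j → σ.y j = 0
  peak : σ.y (mOf γ ρ α σ) = alphaOf γ ρ α σ
  yle : ∀ j, σ.y j ≤ alphaOf γ ρ α σ
  top : σ.y (kOf σ) ≤ 1

variable {γ ρ α : ℝ}

section LamFacts
variable (hγ : 0 < γ) (hρ : 0 < ρ)
lemma lam_zero : lam γ ρ 0 = ρ := by simp [lam]

include hγ

lemma zX_pos (n : ℤ) : (0:ℝ) < (1 + γ) ^ n := zpow_pos (by linarith) n

lemma zX_mono {a b : ℤ} (h : a ≤ b) : ((1 + γ):ℝ) ^ a ≤ (1 + γ) ^ b :=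
  zpow_le_zpow_right₀ (by linarith) h

lemma zX_le_one {a : ℤ} (h : a ≤ 0) : ((1 + γ):ℝ) ^ a ≤ 1 := by
  have h2 := zX_mono (γ := γ) hγ h
  simpa using h2

include hρ

lemma lam_mono {a b : ℤ} (h : a ≤ b) : lam γ ρ a ≤ lam γ ρ b := by
  have h1 : ((1 + γ):ℝ) ^ a ≤ (1 + γ) ^ b := zX_mono hγ h
  have h2 : (0:ℝ) < 1 + ρ := by linarith
  unfold lam; nlinarith

lemma lam_pos {d : ℤ} (hd : 1 ≤ d) : 0 < lam γ ρ d := by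
  have h1 : ((1 + γ):ℝ) ^ (1:ℤ) ≤ (1 + γ) ^ d := zX_mono hγ hd
  rw [zpow_one] at h1
  have h3 : (0:ℝ) < 1 + ρ := by linarith
  unfold lam; nlinarith

lemma lam_sub_rho_pos {d : ℤ} (hd : 1 ≤ d) : 0 < lam γ ρ d - ρ := by
  have h1 : ((1 + γ):ℝ) ^ (1:ℤ) ≤ (1 + γ) ^ d := zX_mono hγ hd
  rw [zpow_one] at h1
  have h3 : (0:ℝ) < 1 + ρ := by linarith
  unfold lam; nlinarith

lemma z_sub_one_pos : (0:ℝ) < (1 + ρ) * (1 + γ) - 1 := by nlinarith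

lemma kap_pos : 0 < kap γ ρ := by
  unfold kap
  exact div_pos (by nlinarith) (z_sub_one_pos hγ hρ)

lemma one_le_kap : 1 ≤ kap γ ρ := by
  unfold kap
  rw [le_div_iff₀ (z_sub_one_pos hγ hρ)]
  nlinarith

/-- The key rate-comparison estimate: `λ_a ≤ κ (1+γ)^(a-b) λ_b` for `a ≤ b`, `1 ≤ b`. -/
lemma lam_comp {a b : ℤ} (hab : a ≤ b) (hb : 1 ≤ b) :
    lam γ ρ a ≤ kap γ ρ * (1 + γ) ^ (a - b) * lam γ ρ b := by
  have hz := z_sub_one_pos hγ hρ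
  have hXb : ((1 + γ):ℝ) ^ (1:ℤ) ≤ (1 + γ) ^ b := zX_mono hγ hb
  rw [zpow_one] at hXb
  have h2 : (0:ℝ) < 1 + ρ := by linarith
  -- step 1 : (1+ρ) X^b ≤ kap * lam b
  have key : (1 + ρ) * (1 + γ) ^ b ≤ kap γ ρ * lam γ ρ b := by
    unfold kap lam
    rw [div_mul_eq_mul_div, le_div_iff₀ hz]
    nlinarith
  -- step 2 : lam a ≤ X^(a-b) * ((1+ρ) X^b)
  have h3 : lam γ ρ a ≤ (1 + γ) ^ (a - b) * ((1 + ρ) * (1 + γ) ^ b) := by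
    have : ((1 + γ):ℝ) ^ (a - b) * (1 + γ) ^ b = (1 + γ) ^ a := by
      rw [← zpow_add₀ (by linarith : (1 + γ:ℝ) ≠ 0)]; ring_nf
    unfold lam
    nlinarith [zX_pos (γ := γ) hγ a]
  calc lam γ ρ a ≤ (1 + γ) ^ (a - b) * ((1 + ρ) * (1 + γ) ^ b) := h3
    _ ≤ (1 + γ) ^ (a - b) * (kap γ ρ * lam γ ρ b) := by
        have := zX_pos (γ := γ) hγ (a - b)
        nlinarith
    _ = kap γ ρ * (1 + γ) ^ (a - b) * lam γ ρ b := by ring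

end LamFacts

section StateFacts
variable (hγ : 0 < γ) (hρ : 0 < ρ) (hα : 1 < α) {σ : St} (H : GInv γ ρ α σ)
include hγ hρ hα H

lemma alpha_ge : α ≤ alphaOf γ ρ α σ := by
  have h : 0 ≤ ρ * σ.s / γ := by
    have := H.s0; positivity
  unfold alphaOf; linarith

lemma alpha_gt_one : 1 < alphaOf γ ρ α σ := lt_of_lt_of_le hα (alpha_ge hγ hρ hα H)

lemma posset_bdd : BddAbove {j : ℕ | 0 < σ.y j} := by
  refine ⟨kOf σ, fun j hj => ?_⟩
  by_contra h
  have h2 := H.supp j (by omega)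
  simp only [Set.mem_setOf_eq, h2] at hj
  exact lt_irrefl _ hj

lemma le_k_of_pos {j : ℕ} (h : 0 < σ.y j) : j ≤ kOf σ :=
  le_csSup (posset_bdd hγ hρ hα H) h

lemma posset_ne : {j : ℕ | 0 < σ.y j}.Nonempty :=
  ⟨mOf γ ρ α σ, by
    simp only [Set.mem_setOf_eq, H.peak]; linarith [alpha_gt_one hγ hρ hα H]⟩

lemma y_k_pos : 0 < σ.y (kOf σ) :=
  Nat.sSup_mem (posset_ne hγ hρ hα H) (posset_bdd hγ hρ hα H)

lemma eqset_bdd : BddAbove {j : ℕ | σ.y j = alphaOf γ ρ α σ} := by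
  refine ⟨kOf σ, fun j hj => ?_⟩
  simp only [Set.mem_setOf_eq] at hj
  exact le_k_of_pos hγ hρ hα H (by rw [hj]; linarith [alpha_gt_one hγ hρ hα H])

lemma eq_alpha_le_m {j : ℕ} (h : σ.y j = alphaOf γ ρ α σ) : j ≤ mOf γ ρ α σ :=
  le_csSup (eqset_bdd hγ hρ hα H) h

lemma m_lt_k : mOf γ ρ α σ < kOf σ := by
  have h1 : mOf γ ρ α σ ≤ kOf σ :=
    le_k_of_pos hγ hρ hα H (by rw [H.peak]; linarith [alpha_gt_one hγ hρ hα H])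
  rcases lt_or_eq_of_le h1 with h | h
  · exact h
  · exfalso
    have := H.top
    rw [← h, H.peak] at this
    linarith [alpha_gt_one hγ hρ hα H]

omit hγ hρ hα H in
lemma k_le_kstar : kOf σ ≤ kstarOf σ := by
  unfold kstarOf; split <;> omega

lemma m_lt_kstar : mOf γ ρ α σ < kstarOf σ :=
  lt_of_lt_of_le (m_lt_k hγ hρ hα H) k_le_kstar

lemma kstar_sub_m_one_le : 1 ≤ (kstarOf σ : ℤ) - (mOf γ ρ α σ : ℤ) := by
  have := m_lt_kstar hγ hρ hα H; omega

lemma y_kstar_lt_one : σ.y (kstarOf σ) < 1 := by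
  unfold kstarOf; split
  · assumption
  · rw [H.supp _ (by omega)]; norm_num

lemma delta_pos {j : ℕ} (hj : j ∈ Set.Ioc (mOf γ ρ α σ) (kstarOf σ)) :
    0 < deltaOf γ ρ α σ j := by
  obtain ⟨hj1, hj2⟩ := hj
  unfold deltaOf
  split
  · apply div_pos
    · have := y_kstar_lt_one hγ hρ hα H
      nlinarith
    · exact lam_pos hγ hρ (kstar_sub_m_one_le hγ hρ hα H)
  · apply div_pos
    · have h1 : σ.y j ≤ alphaOf γ ρ α σ := H.yle j
      have h2 : σ.y j ≠ alphaOf γ ρ α σ := fun h => by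
        have := eq_alpha_le_m hγ hρ hα H h; omega
      have : σ.y j < alphaOf γ ρ α σ := lt_of_le_of_ne h1 h2
      nlinarith
    · exact lam_sub_rho_pos hγ hρ (by omega)

omit hγ hρ hα H in
lemma Delta_le {j : ℕ} (hj : j ∈ Set.Ioc (mOf γ ρ α σ) (kstarOf σ)) :
    DeltaOf γ ρ α σ ≤ deltaOf γ ρ α σ j := by
  unfold DeltaOf
  exact csInf_le (((Set.finite_Ioc _ _).image _).bddBelow) ⟨j, hj, rfl⟩

lemma kstar_mem_Ioc : kstarOf σ ∈ Set.Ioc (mOf γ ρ α σ) (kstarOf σ) :=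
  ⟨m_lt_kstar hγ hρ hα H, le_rfl⟩

lemma Delta_pos : 0 < DeltaOf γ ρ α σ := by
  unfold DeltaOf
  obtain ⟨j, hj, hje⟩ :=
    ((Set.nonempty_Ioc.mpr (m_lt_kstar hγ hρ hα H)).image (deltaOf γ ρ α σ)).csInf_mem
      ((Set.finite_Ioc _ _).image _)
  rw [← hje]
  exact delta_pos hγ hρ hα H hj

lemma Delta_le_inv_lam :
    DeltaOf γ ρ α σ ≤ γ / lam γ ρ ((kstarOf σ : ℤ) - (mOf γ ρ α σ : ℤ)) := by
  have h1 := Delta_le (σ := σ) (γ := γ) (ρ := ρ) (α := α) (kstar_mem_Ioc hγ hρ hα H)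
  have h2 : deltaOf γ ρ α σ (kstarOf σ) =
      (1 - σ.y (kstarOf σ)) * γ / lam γ ρ ((kstarOf σ : ℤ) - (mOf γ ρ α σ : ℤ)) := by
    unfold deltaOf; rw [if_pos rfl]
  have hlam := lam_pos hγ hρ (kstar_sub_m_one_le hγ hρ hα H)
  have h3 : (1 - σ.y (kstarOf σ)) * γ ≤ γ := by nlinarith [H.y0 (kstarOf σ)]
  calc DeltaOf γ ρ α σ ≤ _ := h1.trans_eq h2
    _ ≤ γ / lam γ ρ ((kstarOf σ : ℤ) - (mOf γ ρ α σ : ℤ)) :=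
        (div_le_div_iff_of_pos_right hlam).mpr h3

end StateFacts

section StepFacts
variable (hγ : 0 < γ) (hρ : 0 < ρ) (hα : 1 < α) {σ : St} (H : GInv γ ρ α σ)

omit hγ hρ hα H in
lemma step_s : (step γ ρ α σ).s = σ.s + DeltaOf γ ρ α σ := rfl

omit hγ hρ hα H in
lemma step_y (j : ℕ) : (step γ ρ α σ).y j =
    if j ≤ kstarOf σ then
      max (σ.y j + DeltaOf γ ρ α σ * lam γ ρ ((j : ℤ) - (mOf γ ρ α σ : ℤ)) / γ) 0
    else 0 := rfl

omit hγ hρ hα H in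
lemma step_y_of_le {j : ℕ} (hj : j ≤ kstarOf σ) :
    (step γ ρ α σ).y j =
      max (σ.y j + DeltaOf γ ρ α σ * lam γ ρ ((j : ℤ) - (mOf γ ρ α σ : ℤ)) / γ) 0 := by
  rw [step_y, if_pos hj]

omit hγ hρ hα H in
lemma step_y_of_gt {j : ℕ} (hj : kstarOf σ < j) : (step γ ρ α σ).y j = 0 := by
  rw [step_y, if_neg (by omega)]

omit hγ hρ hα H in
lemma alpha_step :
    alphaOf γ ρ α (step γ ρ α σ) = alphaOf γ ρ α σ + ρ * DeltaOf γ ρ α σ / γ := by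
  unfold alphaOf; rw [step_s]; ring

include hγ hρ hα H

lemma step_y_top :
    (step γ ρ α σ).y (kstarOf σ) = σ.y (kstarOf σ) +
      DeltaOf γ ρ α σ * lam γ ρ ((kstarOf σ : ℤ) - (mOf γ ρ α σ : ℤ)) / γ := by
  rw [step_y_of_le le_rfl]
  apply max_eq_left
  have h1 := H.y0 (kstarOf σ)
  have h2 := Delta_pos hγ hρ hα H
  have h3 := lam_pos hγ hρ (kstar_sub_m_one_le hγ hρ hα H)
  positivity

lemma step_y_top_pos : 0 < (step γ ρ α σ).y (kstarOf σ) := by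
  rw [step_y_top hγ hρ hα H]
  have h1 := H.y0 (kstarOf σ)
  have h2 := Delta_pos hγ hρ hα H
  have h3 := lam_pos hγ hρ (kstar_sub_m_one_le hγ hρ hα H)
  positivity

lemma step_y_top_le_one : (step γ ρ α σ).y (kstarOf σ) ≤ 1 := by
  rw [step_y_top hγ hρ hα H]
  have hlam := lam_pos hγ hρ (kstar_sub_m_one_le hγ hρ hα H)
  have h1 := Delta_le (σ := σ) (γ := γ) (ρ := ρ) (α := α) (kstar_mem_Ioc hγ hρ hα H)
  have h2 : deltaOf γ ρ α σ (kstarOf σ) =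
      (1 - σ.y (kstarOf σ)) * γ / lam γ ρ ((kstarOf σ : ℤ) - (mOf γ ρ α σ : ℤ)) := by
    unfold deltaOf; rw [if_pos rfl]
  rw [h2] at h1
  have h3 : DeltaOf γ ρ α σ * lam γ ρ ((kstarOf σ : ℤ) - (mOf γ ρ α σ : ℤ)) ≤
      (1 - σ.y (kstarOf σ)) * γ := by
    rw [le_div_iff₀ hlam] at h1; linarith
  have h4 : DeltaOf γ ρ α σ * lam γ ρ ((kstarOf σ : ℤ) - (mOf γ ρ α σ : ℤ)) / γ ≤
      1 - σ.y (kstarOf σ) := by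
    rw [div_le_iff₀ hγ]; nlinarith
  linarith

lemma posset_step_bdd : BddAbove {j : ℕ | 0 < (step γ ρ α σ).y j} := by
  refine ⟨kstarOf σ, fun j hj => ?_⟩
  by_contra h
  have h2 := step_y_of_gt (γ := γ) (ρ := ρ) (α := α) (σ := σ) (j := j) (by omega)
  simp only [Set.mem_setOf_eq, h2] at hj
  exact lt_irrefl _ hj

lemma kOf_step : kOf (step γ ρ α σ) = kstarOf σ := by
  apply le_antisymm
  · apply csSup_le ⟨kstarOf σ, step_y_top_pos hγ hρ hα H⟩
    intro j hj
    by_contra h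
    have h2 := step_y_of_gt (γ := γ) (ρ := ρ) (α := α) (σ := σ) (j := j) (by omega)
    simp only [Set.mem_setOf_eq, h2] at hj
    exact lt_irrefl _ hj
  · exact le_csSup (posset_step_bdd hγ hρ hα H) (step_y_top_pos hγ hρ hα H)

lemma kstar_step_eq : kstarOf (step γ ρ α σ) =
    if (step γ ρ α σ).y (kstarOf σ) < 1 then kstarOf σ else kstarOf σ + 1 := by
  have h0 : kstarOf (step γ ρ α σ) =
      if (step γ ρ α σ).y (kOf (step γ ρ α σ)) < 1 then kOf (step γ ρ α σ)
      else kOf (step γ ρ α σ) + 1 := rfl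
  rw [h0, kOf_step hγ hρ hα H]

lemma step_y_peak : (step γ ρ α σ).y (mOf γ ρ α σ) = alphaOf γ ρ α (step γ ρ α σ) := by
  rw [step_y_of_le (m_lt_kstar hγ hρ hα H).le, sub_self, lam_zero, H.peak, alpha_step]
  rw [show alphaOf γ ρ α σ + DeltaOf γ ρ α σ * ρ / γ =
    alphaOf γ ρ α σ + ρ * DeltaOf γ ρ α σ / γ from by ring]
  apply max_eq_left
  have h1 := alpha_gt_one hγ hρ hα H
  have h2 := Delta_pos hγ hρ hα H
  have h5 : 0 < ρ * DeltaOf γ ρ α σ / γ := by positivity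
  linarith

lemma step_yle : ∀ j, (step γ ρ α σ).y j ≤ alphaOf γ ρ α (step γ ρ α σ) := by
  intro j
  have hA := alpha_gt_one hγ hρ hα H
  have hΔ := Delta_pos hγ hρ hα H
  have hA' : 0 < alphaOf γ ρ α (step γ ρ α σ) := by
    rw [alpha_step]
    have : 0 ≤ ρ * DeltaOf γ ρ α σ / γ := by positivity
    linarith
  rcases le_or_gt j (kstarOf σ) with hj | hj
  · rw [step_y_of_le hj]
    apply max_le _ hA'.le
    rw [alpha_step]
    rcases le_or_gt j (mOf γ ρ α σ) with hjm | hjm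
    · -- slow sites: rate at most ρ
      have h1 : lam γ ρ ((j : ℤ) - (mOf γ ρ α σ : ℤ)) ≤ ρ := by
        have h0 := lam_mono (γ := γ) (ρ := ρ) hγ hρ
          (show (j : ℤ) - (mOf γ ρ α σ : ℤ) ≤ 0 by omega)
        rwa [lam_zero] at h0
      have h2 : DeltaOf γ ρ α σ * lam γ ρ ((j : ℤ) - (mOf γ ρ α σ : ℤ)) ≤
          ρ * DeltaOf γ ρ α σ := by nlinarith
      have h3 := (div_le_div_iff_of_pos_right hγ).mpr h2
      have h4 := H.yle j
      linarith
    · rcases eq_or_lt_of_le hj with hjk | hjk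
      · -- the top site: value stays at most 1 < α
        have h1 := step_y_top_le_one hγ hρ hα H
        rw [step_y_top hγ hρ hα H] at h1
        rw [hjk]
        have h5 : 0 ≤ ρ * DeltaOf γ ρ α σ / γ := by positivity
        linarith
      · -- interior sites: the defining inequality for Δ
        have hmem : j ∈ Set.Ioc (mOf γ ρ α σ) (kstarOf σ) := ⟨hjm, hj⟩
        have h1 := Delta_le (σ := σ) (γ := γ) (ρ := ρ) (α := α) hmem
        have hne : j ≠ kstarOf σ := by omega
        have h2 : deltaOf γ ρ α σ j =
            (alphaOf γ ρ α σ - σ.y j) * γ /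
              (lam γ ρ ((j : ℤ) - (mOf γ ρ α σ : ℤ)) - ρ) := by
          unfold deltaOf; rw [if_neg hne]
        rw [h2] at h1
        have hden := lam_sub_rho_pos hγ hρ (show 1 ≤ (j : ℤ) - (mOf γ ρ α σ : ℤ) by omega)
        rw [le_div_iff₀ hden] at h1
        -- h1 : Δ * (lam - ρ) ≤ (A - y j) * γ
        have h3 : DeltaOf γ ρ α σ * (lam γ ρ ((j : ℤ) - (mOf γ ρ α σ : ℤ)) - ρ) / γ ≤
            alphaOf γ ρ α σ - σ.y j := by
          rw [div_le_iff₀ hγ]; linarith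
        have h4 : DeltaOf γ ρ α σ * (lam γ ρ ((j : ℤ) - (mOf γ ρ α σ : ℤ)) - ρ) / γ =
            DeltaOf γ ρ α σ * lam γ ρ ((j : ℤ) - (mOf γ ρ α σ : ℤ)) / γ -
              ρ * DeltaOf γ ρ α σ / γ := by ring
        linarith [h4 ▸ h3]
  · rw [step_y_of_gt hj]
    exact hA'.le

lemma GInv_step : GInv γ ρ α (step γ ρ α σ) := by
  have hA' : 1 < alphaOf γ ρ α (step γ ρ α σ) := by
    rw [alpha_step]
    have h2 := Delta_pos hγ hρ hα H
    have : 0 ≤ ρ * DeltaOf γ ρ α σ / γ := by positivity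
    have := alpha_gt_one hγ hρ hα H
    linarith
  refine ⟨?_, ?_, ?_, ?_, step_yle hγ hρ hα H, ?_⟩
  · rw [step_s]
    have := Delta_pos hγ hρ hα H
    have := H.s0
    linarith
  · intro j
    by_cases hj : j ≤ kstarOf σ
    · rw [step_y_of_le hj]; exact le_max_right _ _
    · rw [step_y_of_gt (by omega)]
  · intro j hj
    rw [kOf_step hγ hρ hα H] at hj
    exact step_y_of_gt hj
  · -- peak: mOf of the new state realizes the new alpha
    have hne : {j : ℕ | (step γ ρ α σ).y j = alphaOf γ ρ α (step γ ρ α σ)}.Nonempty :=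
      ⟨mOf γ ρ α σ, step_y_peak hγ hρ hα H⟩
    have hbdd : BddAbove {j : ℕ | (step γ ρ α σ).y j = alphaOf γ ρ α (step γ ρ α σ)} := by
      refine ⟨kstarOf σ, fun j hj => ?_⟩
      by_contra h
      have h2 := step_y_of_gt (γ := γ) (ρ := ρ) (α := α) (σ := σ) (j := j) (by omega)
      simp only [Set.mem_setOf_eq, h2] at hj
      linarith
    exact Nat.sSup_mem hne hbdd
  · rw [kOf_step hγ hρ hα H]
    exact step_y_top_le_one hγ hρ hα H

lemma mOf_step_mono : mOf γ ρ α σ ≤ mOf γ ρ α (step γ ρ α σ) := by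
  have hbdd : BddAbove {j : ℕ | (step γ ρ α σ).y j = alphaOf γ ρ α (step γ ρ α σ)} :=
    eqset_bdd hγ hρ hα (GInv_step hγ hρ hα H)
  exact le_csSup hbdd (step_y_peak hγ hρ hα H)

/-- The per-step gain estimate. -/
lemma step_gain (j : ℕ) :
    (step γ ρ α σ).y j - σ.y j ≤
      kap γ ρ * (1 + γ) ^ ((j : ℤ) - (kstarOf σ : ℤ)) *
        (DeltaOf γ ρ α σ * lam γ ρ ((kstarOf σ : ℤ) - (mOf γ ρ α σ : ℤ)) / γ) := by
  have hΔ := Delta_pos hγ hρ hα H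
  have hlam := lam_pos hγ hρ (kstar_sub_m_one_le hγ hρ hα H)
  have hkap := kap_pos hγ hρ
  have hw := zX_pos (γ := γ) hγ ((j : ℤ) - (kstarOf σ : ℤ))
  have hRHS : 0 ≤ kap γ ρ * (1 + γ) ^ ((j : ℤ) - (kstarOf σ : ℤ)) *
      (DeltaOf γ ρ α σ * lam γ ρ ((kstarOf σ : ℤ) - (mOf γ ρ α σ : ℤ)) / γ) := by
    positivity
  rcases le_or_gt j (kstarOf σ) with hj | hj
  · rw [step_y_of_le hj]
    rcases le_or_gt 0 (σ.y j + DeltaOf γ ρ α σ * lam γ ρ ((j : ℤ) - (mOf γ ρ α σ : ℤ)) / γ)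
      with h0 | h0
    · rw [max_eq_left h0]
      have hcomp := lam_comp hγ hρ
        (show (j : ℤ) - (mOf γ ρ α σ : ℤ) ≤ (kstarOf σ : ℤ) - (mOf γ ρ α σ : ℤ) by omega)
        (kstar_sub_m_one_le hγ hρ hα H)
      have hexp : ((j : ℤ) - (mOf γ ρ α σ : ℤ)) - ((kstarOf σ : ℤ) - (mOf γ ρ α σ : ℤ)) =
          (j : ℤ) - (kstarOf σ : ℤ) := by ring
      rw [hexp] at hcomp
      have h2 : DeltaOf γ ρ α σ * lam γ ρ ((j : ℤ) - (mOf γ ρ α σ : ℤ)) ≤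
          DeltaOf γ ρ α σ *
            (kap γ ρ * (1 + γ) ^ ((j : ℤ) - (kstarOf σ : ℤ)) *
              lam γ ρ ((kstarOf σ : ℤ) - (mOf γ ρ α σ : ℤ))) :=
        mul_le_mul_of_nonneg_left hcomp hΔ.le
      have h3 := (div_le_div_iff_of_pos_right hγ).mpr h2
      have heq : DeltaOf γ ρ α σ *
            (kap γ ρ * (1 + γ) ^ ((j : ℤ) - (kstarOf σ : ℤ)) *
              lam γ ρ ((kstarOf σ : ℤ) - (mOf γ ρ α σ : ℤ))) / γ =
          kap γ ρ * (1 + γ) ^ ((j : ℤ) - (kstarOf σ : ℤ)) *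
            (DeltaOf γ ρ α σ * lam γ ρ ((kstarOf σ : ℤ) - (mOf γ ρ α σ : ℤ)) / γ) := by
        ring
      rw [heq] at h3
      linarith
    · rw [max_eq_right h0.le]
      have := H.y0 j
      linarith
  · rw [step_y_of_gt hj]
    have := H.y0 j
    linarith

end StepFacts

section MainInduction
variable (hγ : 0 < γ) (hρ : 0 < ρ) (hα : 1 < α)

lemma state_zero : state γ ρ α 0 = ⟨0, fun j => max (α - j) 0⟩ := rfl

lemma state_succ (n : ℕ) : state γ ρ α (n + 1) = step γ ρ α (state γ ρ α n) :=
  Function.iterate_succ_apply' _ _ _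

include hγ hρ hα

lemma GInv_init : GInv γ ρ α ⟨0, fun j => max (α - j) 0⟩ := by
  set σ₀ : St := ⟨0, fun j => max (α - j) 0⟩ with hσ₀
  have hy : ∀ j : ℕ, σ₀.y j = max (α - j) 0 := fun j => rfl
  have hs : σ₀.s = 0 := rfl
  have hα0 : alphaOf γ ρ α σ₀ = α := by
    unfold alphaOf; rw [hs]; field_simp; ring
  have hPbdd : BddAbove {j : ℕ | 0 < σ₀.y j} := by
    refine ⟨Nat.ceil α, fun j hj => ?_⟩
    simp only [Set.mem_setOf_eq, hy, lt_max_iff, lt_self_iff_false, or_false] at hj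
    exact (Nat.lt_ceil.mpr (by linarith)).le
  have hPmem : ∀ j : ℕ, 0 < σ₀.y j ↔ (j : ℝ) < α := by
    intro j
    rw [hy, lt_max_iff]
    constructor
    · rintro (h | h) <;> [linarith; linarith]
    · intro h; left; linarith
  have hk1 : α ≤ (kOf σ₀ : ℝ) + 1 := by
    by_contra h
    push_neg at h
    have hmem : 0 < σ₀.y (kOf σ₀ + 1) := (hPmem _).mpr (by push_cast; linarith)
    have := le_csSup hPbdd hmem
    change kOf σ₀ + 1 ≤ kOf σ₀ at this
    omega
  have hsupp : ∀ j, kOf σ₀ < j → σ₀.y j = 0 := by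
    intro j hj
    by_contra h
    have h0 : 0 ≤ σ₀.y j := by rw [hy]; exact le_max_right _ _
    have h1 : 0 < σ₀.y j := lt_of_le_of_ne h0 (Ne.symm h)
    have := le_csSup hPbdd h1
    change j ≤ kOf σ₀ at this
    omega
  have hE : {j : ℕ | σ₀.y j = alphaOf γ ρ α σ₀} = {0} := by
    ext j
    simp only [Set.mem_setOf_eq, Set.mem_singleton_iff, hα0, hy]
    constructor
    · intro h
      by_contra hj
      have hj1 : (1:ℝ) ≤ j := by exact_mod_cast Nat.one_le_iff_ne_zero.mpr hj
      rcases le_or_gt (α - j) 0 with h2 | h2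
      · rw [max_eq_right h2] at h; linarith
      · rw [max_eq_left h2.le] at h; linarith
    · rintro rfl
      push_cast
      rw [sub_zero, max_eq_left (by linarith)]
  have hm : mOf γ ρ α σ₀ = 0 := by
    unfold mOf; rw [hE, csSup_singleton]
  refine ⟨le_refl 0, fun j => by rw [hy]; exact le_max_right _ _, hsupp, ?_, ?_, ?_⟩
  · rw [hm, hα0, hy]
    push_cast
    rw [sub_zero, max_eq_left (by linarith)]
  · intro j
    rw [hy, hα0]
    have : (0:ℝ) ≤ j := Nat.cast_nonneg j
    exact max_le (by linarith) (by linarith)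
  · rw [hy]
    exact max_le (by linarith) (by linarith)

lemma GInv_state : ∀ n, GInv γ ρ α (state γ ρ α n) := by
  intro n
  induction n with
  | zero => rw [state_zero]; exact GInv_init hγ hρ hα
  | succ n ih => rw [state_succ]; exact GInv_step hγ hρ hα ih

omit hρ hα in
lemma c0_ge_one : (1:ℝ) ≤ (1 + γ) / γ := by
  rw [le_div_iff₀ hγ]; linarith

lemma alpha_le_Phi {σ : St} (H : GInv γ ρ α σ) {j : ℕ} (hj : j ≤ kstarOf σ) :
    α ≤ Phi γ ρ α σ j := by
  unfold Phi
  have hw : (0:ℝ) < (1 + γ) ^ ((j : ℤ) - (kstarOf σ : ℤ)) :=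
    zX_pos hγ _
  have hw1 : ((1 + γ):ℝ) ^ ((j : ℤ) - (kstarOf σ : ℤ)) ≤ 1 :=
    zX_le_one hγ (by omega)
  have hy0 := H.y0 (kstarOf σ)
  have hy1 := (y_kstar_lt_one hγ hρ hα H).le
  have hc0 := c0_ge_one (γ := γ) hγ
  have hkap := kap_pos (γ := γ) (ρ := ρ) hγ hρ
  have hE : 0 ≤ (1 + γ) / γ - σ.y (kstarOf σ) := by linarith
  nlinarith [mul_le_of_le_one_left hE hw1]

lemma Phi_le_bound {σ : St} (H : GInv γ ρ α σ) (j : ℕ) :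
    Phi γ ρ α σ j ≤ α + kap γ ρ * ((1 + γ) / γ) := by
  unfold Phi
  have hw : (0:ℝ) < (1 + γ) ^ ((j : ℤ) - (kstarOf σ : ℤ)) := zX_pos hγ _
  have hy1 := (y_kstar_lt_one hγ hρ hα H).le
  have hc0 := c0_ge_one (γ := γ) hγ
  have hkap := kap_pos (γ := γ) (ρ := ρ) hγ hρ
  have hE : 0 ≤ (1 + γ) / γ - σ.y (kstarOf σ) := by linarith
  nlinarith [mul_nonneg hw.le hE]

/-- The key potential-function bound, proved by induction along the recursion. -/
lemma y_le_Phi : ∀ n, ∀ j, j ≤ kstarOf (state γ ρ α n) →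
    (state γ ρ α n).y j ≤ Phi γ ρ α (state γ ρ α n) j := by
  intro n
  induction n with
  | zero =>
    intro j hj
    have H := GInv_init hγ hρ hα
    rw [state_zero] at *
    have h1 : (⟨0, fun j => max (α - j) 0⟩ : St).y j ≤ α := by
      have : (0:ℝ) ≤ j := Nat.cast_nonneg j
      exact max_le (by linarith) (by linarith)
    exact h1.trans (alpha_le_Phi hγ hρ hα H hj)
  | succ n ih =>
    intro j hj
    have H := GInv_state hγ hρ hα n
    rw [state_succ] at *
    set σ := state γ ρ α n with hσ
    have hkap := kap_pos (γ := γ) (ρ := ρ) hγ hρ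
    have htople := step_y_top_le_one hγ hρ hα H
    have hkse := kstar_step_eq hγ hρ hα H
    by_cases ht : (step γ ρ α σ).y (kstarOf σ) < 1
    · -- k* is unchanged
      rw [if_pos ht] at hkse
      rw [hkse] at hj
      have hgain := step_gain hγ hρ hα H j
      have hlhs := ih j hj
      have hPhiEq : Phi γ ρ α (step γ ρ α σ) j = Phi γ ρ α σ j +
          kap γ ρ * (1 + γ) ^ ((j : ℤ) - (kstarOf σ : ℤ)) *
            ((step γ ρ α σ).y (kstarOf σ) - σ.y (kstarOf σ)) := by
        unfold Phi
        rw [hkse]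
        ring
      have h3 : (step γ ρ α σ).y (kstarOf σ) - σ.y (kstarOf σ) =
          DeltaOf γ ρ α σ * lam γ ρ ((kstarOf σ : ℤ) - (mOf γ ρ α σ : ℤ)) / γ := by
        rw [step_y_top hγ hρ hα H]; ring
      rw [hPhiEq, h3]
      linarith
    · -- k* increases by one
      rw [if_neg ht] at hkse
      have htop1 : (step γ ρ α σ).y (kstarOf σ) = 1 := le_antisymm htople (by linarith)
      rw [hkse] at hj
      rcases Nat.lt_or_ge j (kstarOf σ + 1) with hjlt | hjge
      · -- j ≤ old k*
        have hjle : j ≤ kstarOf σ := by omega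
        have hgain := step_gain hγ hρ hα H j
        have hlhs := ih j hjle
        have hy'new : (step γ ρ α σ).y (kstarOf σ + 1) = 0 :=
          step_y_of_gt (by omega)
        have hG : DeltaOf γ ρ α σ * lam γ ρ ((kstarOf σ : ℤ) - (mOf γ ρ α σ : ℤ)) / γ =
            1 - σ.y (kstarOf σ) := by
          have h2 := step_y_top hγ hρ hα H
          rw [htop1] at h2
          linarith
        rw [hG] at hgain
        have hPhiEq : Phi γ ρ α (step γ ρ α σ) j = Phi γ ρ α σ j +
            kap γ ρ * (1 + γ) ^ ((j : ℤ) - (kstarOf σ : ℤ)) * (1 - σ.y (kstarOf σ)) := by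
          unfold Phi
          rw [hkse, hy'new]
          have hX0 : ((1 + γ):ℝ) ≠ 0 := by linarith
          have hexp : ((j : ℤ) - ((kstarOf σ : ℕ) + 1 : ℕ)) =
              ((j : ℤ) - (kstarOf σ : ℤ)) - 1 := by push_cast; ring
          rw [hexp, zpow_sub₀ hX0, zpow_one]
          field_simp
          ring
        rw [hPhiEq]
        linarith
      · -- j is the new top site
        have hjeq : j = kstarOf σ + 1 := by omega
        have hy'new : (step γ ρ α σ).y j = 0 := by
          rw [hjeq]; exact step_y_of_gt (by omega)
        rw [hy'new]
        have H' := GInv_step hγ hρ hα H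
        have := alpha_le_Phi hγ hρ hα H' (j := j) (by rw [hkse]; omega)
        linarith
  
lemma alpha_state_le (n : ℕ) :
    alphaOf γ ρ α (state γ ρ α n) ≤ α + kap γ ρ * ((1 + γ) / γ) := by
  have H := GInv_state hγ hρ hα n
  have h1 := y_le_Phi hγ hρ hα n (mOf γ ρ α (state γ ρ α n))
    (m_lt_kstar hγ hρ hα H).le
  rw [H.peak] at h1
  exact h1.trans (Phi_le_bound hγ hρ hα H _)

lemma s_state_le (n : ℕ) :
    (state γ ρ α n).s ≤ γ * (kap γ ρ * ((1 + γ) / γ)) / ρ := by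
  have h1 := alpha_state_le hγ hρ hα n
  unfold alphaOf at h1
  have h2 : ρ * (state γ ρ α n).s / γ ≤ kap γ ρ * ((1 + γ) / γ) := by linarith
  rw [div_le_iff₀ hγ] at h2
  rw [le_div_iff₀ hρ]
  nlinarith

end MainInduction

end AuxProof


/-- If the growth parameter `ρ` is strictly positive, then the blow-up time
is finite: `t* = sup_n s_n < ∞`, for every `γ > 0` and every `α > 1`. -/
theorem blowup_of_growing_population (γ ρ α : ℝ) (hγ : 0 < γ) (hρ : 0 < ρ) (hα : 1 < α) :
    BddAbove (Set.range fun n : ℕ => (state γ ρ α n).s) := by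
  refine ⟨γ * (kap γ ρ * ((1 + γ) / γ)) / ρ, ?_⟩
  rintro x ⟨n, rfl⟩
  exact s_state_le hγ hρ hα n

end

end SelectiveSweeps
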